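/- arXiv:2010.12645 — 5 statements merged into one kernel-verified Lean document; each statement's English description precedes it below -/
import Mathlib

section
/- Let S and A be finite sets, let γ ∈ [0,1), let d₀ be a probability distribution on S, and let {M_i}_{i≥1} be a sequence of MDPs that share S, A, γ, d₀, where M_i has transition function P_i : S × A → Δ(S) and mean reward function R_i : S × A → ℝ with |R_i(s,a)| ≤ Rmax for all i, s, a. Suppose there exist ε_P ≥ 0 and ε_R ≥ 0 such that for every i and all s ∈ S, a ∈ A: ∑_{s'∈S} |P_i(s'|s,a) − P_{i+1}(s'|s,a)| ≤ ε_P and |R_i(s,a) − R_{i+1}(s,a)| ≤ ε_R. Then for every policy π, every k ≥ 1 and every δ ≥ 1, |ρ(π, M_k) − ρ(π, M_{k+δ})| ≤ δ · ( γ·Rmax·ε_P/(1−γ)² + ε_R/(1−γ) ). -/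
open scoped BigOperators

/-- The distribution over states at time `t` when running policy `pol` in an MDP
with transition function `P` and start-state distribution `d0`. -/
noncomputable def stateDist {S A : Type*} [Fintype S] [Fintype A]
    (P : S → A → S → ℝ) (pol : S → A → ℝ) (d0 : S → ℝ) : ℕ → S → ℝ
  | 0 => d0
  | (t + 1) => fun s' => ∑ s : S, ∑ a : A, stateDist P pol d0 t s * pol s a * P s a s'

/-- The performance `ρ(π, M) = ∑_{t=0}^∞ γ^t E[R(S_t, A_t)]`. -/
noncomputable def perf {S A : Type*} [Fintype S] [Fintype A]
    (P : S → A → S → ℝ) (R : S → A → ℝ) (pol : S → A → ℝ)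
    (d0 : S → ℝ) (γ : ℝ) : ℝ :=
  ∑' t : ℕ, γ ^ t * ∑ s : S, stateDist P pol d0 t s * ∑ a : A, pol s a * R s a

/-- `P s a : S → ℝ` is a probability distribution over next states for each `(s, a)`. -/
def IsTransition {S A : Type*} [Fintype S] (P : S → A → S → ℝ) : Prop :=
  ∀ s a, (∀ s', 0 ≤ P s a s') ∧ ∑ s' : S, P s a s' = 1

/-- `pol s : A → ℝ` is a probability distribution over actions for each state `s`. -/
def IsPolicy {S A : Type*} [Fintype A] (pol : S → A → ℝ) : Prop :=
  ∀ s, (∀ a, 0 ≤ pol s a) ∧ ∑ a : A, pol s a = 1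

/-- `d0` is a probability distribution over states. -/
def IsDist {S : Type*} [Fintype S] (d0 : S → ℝ) : Prop :=
  (∀ s, 0 ≤ d0 s) ∧ ∑ s : S, d0 s = 1

section Aux

variable {S A : Type*} [Fintype S] [Fintype A]

lemma stateDist_nonneg (P : S → A → S → ℝ) (pol : S → A → ℝ) (d0 : S → ℝ)
    (hP : IsTransition P) (hpol : IsPolicy pol) (hd0 : IsDist d0) :
    ∀ t s, 0 ≤ stateDist P pol d0 t s := by
  intro t
  induction t with
  | zero => exact hd0.1
  | succ t ih =>
    intro s'
    apply Finset.sum_nonneg; intro s _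
    apply Finset.sum_nonneg; intro a _
    exact mul_nonneg (mul_nonneg (ih s) ((hpol s).1 a)) ((hP s a).1 s')

lemma stateDist_sum_eq_one (P : S → A → S → ℝ) (pol : S → A → ℝ) (d0 : S → ℝ)
    (hP : IsTransition P) (hpol : IsPolicy pol) (hd0 : IsDist d0) :
    ∀ t, ∑ s : S, stateDist P pol d0 t s = 1 := by
  intro t
  induction t with
  | zero => exact hd0.2
  | succ t ih =>
    show ∑ s' : S, ∑ s : S, ∑ a : A, stateDist P pol d0 t s * pol s a * P s a s' = 1
    calc ∑ s' : S, ∑ s : S, ∑ a : A, stateDist P pol d0 t s * pol s a * P s a s'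
        = ∑ s : S, ∑ a : A, ∑ s' : S, stateDist P pol d0 t s * pol s a * P s a s' := by
          rw [Finset.sum_comm]
          exact Finset.sum_congr rfl fun s _ => Finset.sum_comm
      _ = ∑ s : S, ∑ a : A, stateDist P pol d0 t s * pol s a := by
          refine Finset.sum_congr rfl fun s _ => Finset.sum_congr rfl fun a _ => ?_
          rw [← Finset.mul_sum, (hP s a).2, mul_one]
      _ = ∑ s : S, stateDist P pol d0 t s := by
          refine Finset.sum_congr rfl fun s _ => ?_
          rw [← Finset.mul_sum, (hpol s).2, mul_one]
      _ = 1 := ih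

lemma stateDist_L1 (P P' : S → A → S → ℝ) (pol : S → A → ℝ) (d0 : S → ℝ)
    (hP : IsTransition P) (hP' : IsTransition P')
    (hpol : IsPolicy pol) (hd0 : IsDist d0) (εP : ℝ)
    (hlip : ∀ s a, ∑ s' : S, |P s a s' - P' s a s'| ≤ εP) :
    ∀ t, ∑ s : S, |stateDist P pol d0 t s - stateDist P' pol d0 t s| ≤ t * εP := by
  intro t
  induction t with
  | zero => simp [stateDist]
  | succ t ih =>
    have key : ∀ s' : S, |stateDist P pol d0 (t + 1) s' - stateDist P' pol d0 (t + 1) s'| ≤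
        ∑ s : S, ∑ a : A, pol s a *
          (|stateDist P pol d0 t s - stateDist P' pol d0 t s| * P s a s'
            + stateDist P' pol d0 t s * |P s a s' - P' s a s'|) := by
      intro s'
      show |(∑ s : S, ∑ a : A, stateDist P pol d0 t s * pol s a * P s a s')
          - ∑ s : S, ∑ a : A, stateDist P' pol d0 t s * pol s a * P' s a s'| ≤ _
      rw [← Finset.sum_sub_distrib]
      refine (Finset.abs_sum_le_sum_abs _ _).trans
        (Finset.sum_le_sum fun s _ => ?_)
      rw [← Finset.sum_sub_distrib]
      refine (Finset.abs_sum_le_sum_abs _ _).trans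
        (Finset.sum_le_sum fun a _ => ?_)
      have heq : stateDist P pol d0 t s * pol s a * P s a s'
          - stateDist P' pol d0 t s * pol s a * P' s a s'
          = pol s a * ((stateDist P pol d0 t s - stateDist P' pol d0 t s) * P s a s'
            + stateDist P' pol d0 t s * (P s a s' - P' s a s')) := by ring
      rw [heq, abs_mul, abs_of_nonneg ((hpol s).1 a)]
      refine mul_le_mul_of_nonneg_left ?_ ((hpol s).1 a)
      refine (abs_add_le _ _).trans ?_
      rw [abs_mul, abs_mul, abs_of_nonneg ((hP s a).1 s'),
        abs_of_nonneg (stateDist_nonneg P' pol d0 hP' hpol hd0 t s)]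
    calc ∑ s' : S, |stateDist P pol d0 (t + 1) s' - stateDist P' pol d0 (t + 1) s'|
        ≤ ∑ s' : S, ∑ s : S, ∑ a : A, pol s a *
            (|stateDist P pol d0 t s - stateDist P' pol d0 t s| * P s a s'
              + stateDist P' pol d0 t s * |P s a s' - P' s a s'|) :=
          Finset.sum_le_sum fun s' _ => key s'
      _ = ∑ s : S, ∑ a : A, pol s a *
            (|stateDist P pol d0 t s - stateDist P' pol d0 t s| * (∑ s' : S, P s a s')
              + stateDist P' pol d0 t s * ∑ s' : S, |P s a s' - P' s a s'|) := by
          rw [Finset.sum_comm]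
          refine Finset.sum_congr rfl fun s _ => ?_
          rw [Finset.sum_comm]
          refine Finset.sum_congr rfl fun a _ => ?_
          rw [← Finset.mul_sum, Finset.sum_add_distrib, ← Finset.mul_sum, ← Finset.mul_sum]
      _ ≤ ∑ s : S, ∑ a : A, pol s a *
            (|stateDist P pol d0 t s - stateDist P' pol d0 t s|
              + stateDist P' pol d0 t s * εP) := by
          refine Finset.sum_le_sum fun s _ => Finset.sum_le_sum fun a _ => ?_
          refine mul_le_mul_of_nonneg_left ?_ ((hpol s).1 a)
          rw [(hP s a).2, mul_one]
          refine add_le_add le_rfl ?_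
          exact mul_le_mul_of_nonneg_left (hlip s a)
            (stateDist_nonneg P' pol d0 hP' hpol hd0 t s)
      _ = ∑ s : S, (|stateDist P pol d0 t s - stateDist P' pol d0 t s|
              + stateDist P' pol d0 t s * εP) := by
          refine Finset.sum_congr rfl fun s _ => ?_
          rw [← Finset.sum_mul, (hpol s).2, one_mul]
      _ = (∑ s : S, |stateDist P pol d0 t s - stateDist P' pol d0 t s|)
            + (∑ s : S, stateDist P' pol d0 t s) * εP := by
          rw [Finset.sum_add_distrib, Finset.sum_mul]
      _ ≤ t * εP + 1 * εP := by
          refine add_le_add ih ?_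
          rw [stateDist_sum_eq_one P' pol d0 hP' hpol hd0 t]
      _ = (t + 1 : ℕ) * εP := by push_cast; ring

lemma perf_step (P P' : S → A → S → ℝ) (R R' : S → A → ℝ)
    (pol : S → A → ℝ) (d0 : S → ℝ) (γ Rmax εP εR : ℝ)
    (hγ0 : 0 ≤ γ) (hγ1 : γ < 1) (hεP : 0 ≤ εP) (hεR : 0 ≤ εR) (hRm : 0 ≤ Rmax)
    (hP : IsTransition P) (hP' : IsTransition P')
    (hpol : IsPolicy pol) (hd0 : IsDist d0)
    (hR : ∀ s a, |R s a| ≤ Rmax) (hR' : ∀ s a, |R' s a| ≤ Rmax)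
    (hlipP : ∀ s a, ∑ s' : S, |P s a s' - P' s a s'| ≤ εP)
    (hlipR : ∀ s a, |R s a - R' s a| ≤ εR) :
    |perf P R pol d0 γ - perf P' R' pol d0 γ| ≤
      γ * Rmax * εP / (1 - γ) ^ 2 + εR / (1 - γ) := by
  set f : ℕ → ℝ := fun t => γ ^ t * ∑ s : S, stateDist P pol d0 t s * ∑ a : A, pol s a * R s a
    with hf
  set f' : ℕ → ℝ := fun t => γ ^ t * ∑ s : S, stateDist P' pol d0 t s * ∑ a : A, pol s a * R' s a
    with hf'
  have hterm : ∀ (Q : S → A → S → ℝ) (W : S → A → ℝ), IsTransition Q →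
      (∀ s a, |W s a| ≤ Rmax) → ∀ t,
      |∑ s : S, stateDist Q pol d0 t s * ∑ a : A, pol s a * W s a| ≤ Rmax := by
    intro Q W hQ hW t
    have habs : ∀ s, |∑ a : A, pol s a * W s a| ≤ Rmax := by
      intro s
      refine (Finset.abs_sum_le_sum_abs _ _).trans ?_
      calc ∑ a : A, |pol s a * W s a| ≤ ∑ a : A, pol s a * Rmax := by
            refine Finset.sum_le_sum fun a _ => ?_
            rw [abs_mul, abs_of_nonneg ((hpol s).1 a)]
            exact mul_le_mul_of_nonneg_left (hW s a) ((hpol s).1 a)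
        _ = Rmax := by rw [← Finset.sum_mul, (hpol s).2, one_mul]
    calc |∑ s : S, stateDist Q pol d0 t s * ∑ a : A, pol s a * W s a|
        ≤ ∑ s : S, |stateDist Q pol d0 t s * ∑ a : A, pol s a * W s a| :=
          Finset.abs_sum_le_sum_abs _ _
      _ ≤ ∑ s : S, stateDist Q pol d0 t s * Rmax := by
          refine Finset.sum_le_sum fun s _ => ?_
          rw [abs_mul, abs_of_nonneg (stateDist_nonneg Q pol d0 hQ hpol hd0 t s)]
          exact mul_le_mul_of_nonneg_left (habs s)
            (stateDist_nonneg Q pol d0 hQ hpol hd0 t s)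
      _ = Rmax := by rw [← Finset.sum_mul, stateDist_sum_eq_one Q pol d0 hQ hpol hd0 t, one_mul]
  have hsummf : Summable f := by
    refine Summable.of_norm_bounded
      ((summable_geometric_of_lt_one hγ0 hγ1).mul_left Rmax) fun t => ?_
    rw [Real.norm_eq_abs, hf, abs_mul, abs_pow, abs_of_nonneg hγ0, mul_comm]
    exact mul_le_mul_of_nonneg_right (hterm P R hP hR t) (pow_nonneg hγ0 t)
  have hsummf' : Summable f' := by
    refine Summable.of_norm_bounded
      ((summable_geometric_of_lt_one hγ0 hγ1).mul_left Rmax) fun t => ?_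
    rw [Real.norm_eq_abs, hf', abs_mul, abs_pow, abs_of_nonneg hγ0, mul_comm]
    exact mul_le_mul_of_nonneg_right (hterm P' R' hP' hR' t) (pow_nonneg hγ0 t)
  have hbound : ∀ t, |f t - f' t| ≤ γ ^ t * (t * εP * Rmax + εR) := by
    intro t
    have hdiff : f t - f' t = γ ^ t *
        ((∑ s : S, stateDist P pol d0 t s * ∑ a : A, pol s a * R s a)
          - ∑ s : S, stateDist P' pol d0 t s * ∑ a : A, pol s a * R' s a) := by
      rw [hf, hf']; ring
    rw [hdiff, abs_mul, abs_pow, abs_of_nonneg hγ0]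
    refine mul_le_mul_of_nonneg_left ?_ (pow_nonneg hγ0 t)
    rw [← Finset.sum_sub_distrib]
    refine (Finset.abs_sum_le_sum_abs _ _).trans ?_
    have hsub : ∀ s : S,
        |stateDist P pol d0 t s * ∑ a : A, pol s a * R s a
          - stateDist P' pol d0 t s * ∑ a : A, pol s a * R' s a| ≤
        |stateDist P pol d0 t s - stateDist P' pol d0 t s| * Rmax
          + stateDist P' pol d0 t s * εR := by
      intro s
      have heq : stateDist P pol d0 t s * ∑ a : A, pol s a * R s a
          - stateDist P' pol d0 t s * ∑ a : A, pol s a * R' s a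
          = (stateDist P pol d0 t s - stateDist P' pol d0 t s) * (∑ a : A, pol s a * R s a)
            + stateDist P' pol d0 t s * ∑ a : A, pol s a * (R s a - R' s a) := by
        simp only [Finset.mul_sum, ← Finset.sum_sub_distrib, ← Finset.sum_add_distrib]
        refine Finset.sum_congr rfl fun a _ => ?_
        ring
      rw [heq]
      refine (abs_add_le _ _).trans (add_le_add ?_ ?_)
      · rw [abs_mul]
        refine mul_le_mul_of_nonneg_left ?_ (abs_nonneg _)
        refine (Finset.abs_sum_le_sum_abs _ _).trans ?_
        calc ∑ a : A, |pol s a * R s a| ≤ ∑ a : A, pol s a * Rmax := by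
              refine Finset.sum_le_sum fun a _ => ?_
              rw [abs_mul, abs_of_nonneg ((hpol s).1 a)]
              exact mul_le_mul_of_nonneg_left (hR s a) ((hpol s).1 a)
          _ = Rmax := by rw [← Finset.sum_mul, (hpol s).2, one_mul]
      · rw [abs_mul, abs_of_nonneg (stateDist_nonneg P' pol d0 hP' hpol hd0 t s)]
        refine mul_le_mul_of_nonneg_left ?_
          (stateDist_nonneg P' pol d0 hP' hpol hd0 t s)
        refine (Finset.abs_sum_le_sum_abs _ _).trans ?_
        calc ∑ a : A, |pol s a * (R s a - R' s a)| ≤ ∑ a : A, pol s a * εR := by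
              refine Finset.sum_le_sum fun a _ => ?_
              rw [abs_mul, abs_of_nonneg ((hpol s).1 a)]
              exact mul_le_mul_of_nonneg_left (hlipR s a) ((hpol s).1 a)
          _ = εR := by rw [← Finset.sum_mul, (hpol s).2, one_mul]
    calc ∑ s : S, |stateDist P pol d0 t s * ∑ a : A, pol s a * R s a
          - stateDist P' pol d0 t s * ∑ a : A, pol s a * R' s a|
        ≤ ∑ s : S, (|stateDist P pol d0 t s - stateDist P' pol d0 t s| * Rmax
            + stateDist P' pol d0 t s * εR) := Finset.sum_le_sum fun s _ => hsub s
      _ = (∑ s : S, |stateDist P pol d0 t s - stateDist P' pol d0 t s|) * Rmax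
            + (∑ s : S, stateDist P' pol d0 t s) * εR := by
          rw [Finset.sum_add_distrib, Finset.sum_mul, Finset.sum_mul]
      _ ≤ (t * εP) * Rmax + 1 * εR := by
          refine add_le_add (mul_le_mul_of_nonneg_right
            (stateDist_L1 P P' pol d0 hP hP' hpol hd0 εP hlipP t) hRm) ?_
          rw [stateDist_sum_eq_one P' pol d0 hP' hpol hd0 t]
      _ = t * εP * Rmax + εR := by ring
  have hg : Summable (fun t : ℕ => γ ^ t * (t * εP * Rmax + εR)) := by
    have h1 : Summable (fun t : ℕ => (t : ℝ) * γ ^ t) := by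
      have := summable_pow_mul_geometric_of_norm_lt_one (R := ℝ) 1
        (by rwa [Real.norm_eq_abs, abs_of_nonneg hγ0])
      simpa using this
    have h2 : Summable (fun t : ℕ => γ ^ t) := summable_geometric_of_lt_one hγ0 hγ1
    have : Summable (fun t : ℕ => εP * Rmax * ((t : ℝ) * γ ^ t) + εR * γ ^ t) :=
      (h1.mul_left (εP * Rmax)).add (h2.mul_left εR)
    refine this.congr fun t => ?_
    ring
  have hsumabs : Summable (fun t => |f t - f' t|) := (hsummf.sub hsummf').abs
  have hperf : perf P R pol d0 γ - perf P' R' pol d0 γ = ∑' t, (f t - f' t) := by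
    rw [perf, perf, ← Summable.tsum_sub hsummf hsummf']
  rw [hperf]
  calc |∑' t, (f t - f' t)| ≤ ∑' t, |f t - f' t| := by
        simpa [Real.norm_eq_abs] using norm_tsum_le_tsum_norm
          (f := fun t => f t - f' t) (by simpa [Real.norm_eq_abs] using hsumabs)
    _ ≤ ∑' t : ℕ, γ ^ t * (t * εP * Rmax + εR) := Summable.tsum_le_tsum hbound hsumabs hg
    _ = εP * Rmax * (∑' t : ℕ, (t : ℝ) * γ ^ t) + εR * ∑' t : ℕ, γ ^ t := by
        rw [← tsum_mul_left, ← tsum_mul_left, ← Summable.tsum_add]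
        · exact tsum_congr fun t => by ring
        · refine Summable.mul_left _ ?_
          have := summable_pow_mul_geometric_of_norm_lt_one (R := ℝ) 1
            (by rwa [Real.norm_eq_abs, abs_of_nonneg hγ0])
          simpa using this
        · exact (summable_geometric_of_lt_one hγ0 hγ1).mul_left εR
    _ = γ * Rmax * εP / (1 - γ) ^ 2 + εR / (1 - γ) := by
        rw [tsum_coe_mul_geometric_of_norm_lt_one
          (by rwa [Real.norm_eq_abs, abs_of_nonneg hγ0]),
          tsum_geometric_of_lt_one hγ0 hγ1]
        field_simp

end Aux

/-- **Lipschitz smooth performance** for a sequence of MDPs: if consecutive MDPs have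
transition functions within `εP` (in total variation, i.e. L1) and mean rewards within `εR`,
then for every policy the performance between episodes `k` and `k + δ` differs by at most
`δ·(γ·Rmax·εP/(1−γ)² + εR/(1−γ))`. -/
theorem lipschitz_smooth_performance_ns
    {S A : Type*} [Fintype S] [Fintype A]
    (γ Rmax εP εR : ℝ) (hγ0 : 0 ≤ γ) (hγ1 : γ < 1)
    (hεP : 0 ≤ εP) (hεR : 0 ≤ εR)
    (d0 : S → ℝ) (hd0 : IsDist d0)
    (P : ℕ → S → A → S → ℝ) (R : ℕ → S → A → ℝ)
    (hP : ∀ i, IsTransition (P i))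
    (hR : ∀ i s a, |R i s a| ≤ Rmax)
    (hPlip : ∀ i s a, ∑ s' : S, |P i s a s' - P (i + 1) s a s'| ≤ εP)
    (hRlip : ∀ i s a, |R i s a - R (i + 1) s a| ≤ εR)
    (pol : S → A → ℝ) (hpol : IsPolicy pol)
    (k δ : ℕ) (hk : 1 ≤ k) (hδ : 1 ≤ δ) :
    |perf (P k) (R k) pol d0 γ - perf (P (k + δ)) (R (k + δ)) pol d0 γ| ≤
      (δ : ℝ) * (γ * Rmax * εP / (1 - γ) ^ 2 + εR / (1 - γ)) := by
  have hS : Nonempty S := by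
    by_contra h
    rw [not_nonempty_iff] at h
    have := hd0.2
    simp [Finset.univ_eq_empty] at this
  obtain ⟨s₀⟩ := hS
  have hA : Nonempty A := by
    by_contra h
    rw [not_nonempty_iff] at h
    have := (hpol s₀).2
    simp [Finset.univ_eq_empty] at this
  obtain ⟨a₀⟩ := hA
  have hRm : 0 ≤ Rmax := le_trans (abs_nonneg _) (hR 0 s₀ a₀)
  set C : ℝ := γ * Rmax * εP / (1 - γ) ^ 2 + εR / (1 - γ) with hC
  have hstep : ∀ i, |perf (P i) (R i) pol d0 γ - perf (P (i + 1)) (R (i + 1)) pol d0 γ| ≤ C :=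
    fun i => perf_step (P i) (P (i + 1)) (R i) (R (i + 1)) pol d0 γ Rmax εP εR
      hγ0 hγ1 hεP hεR hRm (hP i) (hP (i + 1)) hpol hd0 (hR i) (hR (i + 1))
      (hPlip i) (hRlip i)
  have main : ∀ n : ℕ, |perf (P k) (R k) pol d0 γ - perf (P (k + n)) (R (k + n)) pol d0 γ| ≤
      (n : ℝ) * C := by
    intro n
    induction n with
    | zero => simp
    | succ n ih =>
      have htri : |perf (P k) (R k) pol d0 γ - perf (P (k + (n + 1))) (R (k + (n + 1))) pol d0 γ| ≤
          |perf (P k) (R k) pol d0 γ - perf (P (k + n)) (R (k + n)) pol d0 γ| +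
          |perf (P (k + n)) (R (k + n)) pol d0 γ -
            perf (P (k + n + 1)) (R (k + n + 1)) pol d0 γ| := by
        have : k + (n + 1) = k + n + 1 := by ring
        rw [this]
        exact abs_sub_le _ _ _
      refine htri.trans ?_
      have := add_le_add ih (hstep (k + n))
      refine this.trans ?_
      push_cast
      ring_nf
      rfl
  exact main δ
end

section
/- Let S and A be finite sets, γ ∈ [0,1), d₀ a probability distribution on S, and let M and M' be two MDPs sharing S, A, γ, d₀, with transition functions P, P' and mean reward functions R, R' bounded in absolute value by Rmax. If for all s ∈ S and a ∈ A: ∑_{s'∈S} |P(s'|s,a) − P'(s'|s,a)| ≤ ε_P and |R(s,a) − R'(s,a)| ≤ ε_R, then for every policy π, |ρ(π, M) − ρ(π, M')| ≤ γ·Rmax·ε_P/(1−γ)² + ε_R/(1−γ). -/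
open scoped BigOperators

lemma stateDist_prob {S A : Type*} [Fintype S] [Fintype A]
    (P : S → A → S → ℝ) (pol : S → A → ℝ) (d0 : S → ℝ)
    (hP : IsTransition P) (hpol : IsPolicy pol) (hd0 : IsDist d0) :
    ∀ t, (∀ s, 0 ≤ stateDist P pol d0 t s) ∧ ∑ s : S, stateDist P pol d0 t s = 1 := by
  intro t
  induction t with
  | zero => exact hd0
  | succ t ih =>
    constructor
    · intro s'
      apply Finset.sum_nonneg; intro s _
      apply Finset.sum_nonneg; intro a _
      exact mul_nonneg (mul_nonneg (ih.1 s) ((hpol s).1 a)) ((hP s a).1 s')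
    · show ∑ s' : S, ∑ s : S, ∑ a : A, stateDist P pol d0 t s * pol s a * P s a s' = 1
      rw [Finset.sum_comm]
      have : ∀ s : S, ∑ s' : S, ∑ a : A, stateDist P pol d0 t s * pol s a * P s a s'
          = stateDist P pol d0 t s := by
        intro s
        rw [Finset.sum_comm]
        have h2 : ∀ a : A, ∑ s' : S, stateDist P pol d0 t s * pol s a * P s a s'
            = stateDist P pol d0 t s * pol s a := by
          intro a
          rw [← Finset.mul_sum, (hP s a).2, mul_one]
        simp_rw [h2, ← Finset.mul_sum, (hpol s).2, mul_one]
      simp_rw [this, ih.2]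

lemma stateDist_l1 {S A : Type*} [Fintype S] [Fintype A]
    (εP : ℝ)
    (d0 : S → ℝ) (hd0 : IsDist d0)
    (P P' : S → A → S → ℝ)
    (hP : IsTransition P) (hP' : IsTransition P')
    (hPclose : ∀ s a, ∑ s' : S, |P s a s' - P' s a s'| ≤ εP)
    (pol : S → A → ℝ) (hpol : IsPolicy pol) :
    ∀ t, ∑ s : S, |stateDist P pol d0 t s - stateDist P' pol d0 t s| ≤ t * εP := by
  intro t
  induction t with
  | zero => simp [stateDist]
  | succ t ih =>
    have hd' := stateDist_prob P' pol d0 hP' hpol hd0 t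
    set x := fun s => stateDist P pol d0 t s - stateDist P' pol d0 t s with hx
    set y := fun s => stateDist P' pol d0 t s with hy
    calc ∑ s' : S, |stateDist P pol d0 (t+1) s' - stateDist P' pol d0 (t+1) s'|
        ≤ ∑ s' : S, ∑ s : S, ∑ a : A,
            (pol s a * (|x s| * P s a s') + pol s a * (y s * |P s a s' - P' s a s'|)) := by
          apply Finset.sum_le_sum; intro s' _
          have heq : stateDist P pol d0 (t+1) s' - stateDist P' pol d0 (t+1) s'
              = ∑ s : S, ∑ a : A,
                (pol s a * (x s * P s a s') + pol s a * (y s * (P s a s' - P' s a s'))) := by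
            show (∑ s : S, ∑ a : A, stateDist P pol d0 t s * pol s a * P s a s')
              - (∑ s : S, ∑ a : A, stateDist P' pol d0 t s * pol s a * P' s a s') = _
            rw [← Finset.sum_sub_distrib]
            apply Finset.sum_congr rfl; intro s _
            rw [← Finset.sum_sub_distrib]
            apply Finset.sum_congr rfl; intro a _
            simp only [hx, hy]; ring
          rw [heq]
          refine (Finset.abs_sum_le_sum_abs _ _).trans ?_
          apply Finset.sum_le_sum; intro s _
          refine (Finset.abs_sum_le_sum_abs _ _).trans ?_
          apply Finset.sum_le_sum; intro a _
          refine (abs_add_le _ _).trans ?_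
          have hys : (0:ℝ) ≤ y s := hd'.1 s
          rw [abs_mul, abs_mul, abs_mul, abs_mul,
            abs_of_nonneg ((hpol s).1 a), abs_of_nonneg ((hP s a).1 s'),
            abs_of_nonneg hys]
      _ = ∑ s : S, ∑ a : A,
            (pol s a * (|x s| * ∑ s' : S, P s a s')
             + pol s a * (y s * ∑ s' : S, |P s a s' - P' s a s'|)) := by
          rw [Finset.sum_comm]
          apply Finset.sum_congr rfl; intro s _
          rw [Finset.sum_comm]
          apply Finset.sum_congr rfl; intro a _
          rw [Finset.sum_add_distrib]
          simp only [← Finset.mul_sum]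
      _ ≤ ∑ s : S, ∑ a : A, (pol s a * (|x s| * 1) + pol s a * (y s * εP)) := by
          gcongr with s hs a ha <;>
            first
              | exact (hpol s).1 a
              | exact abs_nonneg _
              | exact le_of_eq (hP s a).2
              | exact (hd'.1 s : (0:ℝ) ≤ y s)
              | exact hPclose s a
      _ = ∑ s : S, (|x s| + y s * εP) := by
          apply Finset.sum_congr rfl; intro s _
          have h3 : ∀ a : A, pol s a * (|x s| * 1) + pol s a * (y s * εP)
              = pol s a * (|x s| + y s * εP) := by intro a; ring
          simp_rw [h3, ← Finset.sum_mul, (hpol s).2, one_mul]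
      _ ≤ (t + 1 : ℕ) * εP := by
          rw [Finset.sum_add_distrib, ← Finset.sum_mul, hd'.2, one_mul]
          push_cast
          linarith [ih]

/-- **Performance difference bound for two close MDPs**: if the transitions of `M` and `M'`
are within `εP` in L1 distance and the mean rewards within `εR`, then for every policy
`|ρ(π, M) − ρ(π, M')| ≤ γ·Rmax·εP/(1−γ)² + εR/(1−γ)`. -/
theorem perf_diff_close_mdps
    {S A : Type*} [Fintype S] [Fintype A]
    (γ Rmax εP εR : ℝ) (hγ0 : 0 ≤ γ) (hγ1 : γ < 1)
    (d0 : S → ℝ) (hd0 : IsDist d0)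
    (P P' : S → A → S → ℝ) (R R' : S → A → ℝ)
    (hP : IsTransition P) (hP' : IsTransition P')
    (hR : ∀ s a, |R s a| ≤ Rmax) (hR' : ∀ s a, |R' s a| ≤ Rmax)
    (hPclose : ∀ s a, ∑ s' : S, |P s a s' - P' s a s'| ≤ εP)
    (hRclose : ∀ s a, |R s a - R' s a| ≤ εR)
    (pol : S → A → ℝ) (hpol : IsPolicy pol) :
    |perf P R pol d0 γ - perf P' R' pol d0 γ| ≤
      γ * Rmax * εP / (1 - γ) ^ 2 + εR / (1 - γ) := by
  classical
  -- basic positivity facts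
  have hS : Nonempty S := by
    by_contra h
    rw [not_nonempty_iff] at h
    have h2 := hd0.2
    rw [Finset.univ_eq_empty, Finset.sum_empty] at h2
    norm_num at h2
  obtain ⟨s0⟩ := hS
  have hA : Nonempty A := by
    by_contra h
    rw [not_nonempty_iff] at h
    have h2 := (hpol s0).2
    rw [Finset.univ_eq_empty, Finset.sum_empty] at h2
    norm_num at h2
  obtain ⟨a0⟩ := hA
  have hεP : 0 ≤ εP :=
    le_trans (Finset.sum_nonneg fun _ _ => abs_nonneg _) (hPclose s0 a0)
  have hεR : 0 ≤ εR := le_trans (abs_nonneg _) (hRclose s0 a0)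
  have hRm : 0 ≤ Rmax := le_trans (abs_nonneg _) (hR s0 a0)
  have h1γ : 0 < 1 - γ := by linarith
  have hγn : ‖γ‖ < 1 := by rw [Real.norm_eq_abs, abs_of_nonneg hγ0]; exact hγ1
  -- the summands
  set V : S → ℝ := fun s => ∑ a : A, pol s a * R s a with hV
  set V' : S → ℝ := fun s => ∑ a : A, pol s a * R' s a with hV'
  set f : ℕ → ℝ := fun t => γ ^ t * ∑ s : S, stateDist P pol d0 t s * V s with hf
  set f' : ℕ → ℝ := fun t => γ ^ t * ∑ s : S, stateDist P' pol d0 t s * V' s with hf'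
  have hVb : ∀ s, |V s| ≤ Rmax := by
    intro s
    refine (Finset.abs_sum_le_sum_abs _ _).trans ?_
    calc ∑ a : A, |pol s a * R s a| ≤ ∑ a : A, pol s a * Rmax := by
          apply Finset.sum_le_sum; intro a _
          rw [abs_mul, abs_of_nonneg ((hpol s).1 a)]
          exact mul_le_mul_of_nonneg_left (hR s a) ((hpol s).1 a)
      _ = Rmax := by rw [← Finset.sum_mul, (hpol s).2, one_mul]
  have hV'b : ∀ s, |V' s| ≤ Rmax := by
    intro s
    refine (Finset.abs_sum_le_sum_abs _ _).trans ?_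
    calc ∑ a : A, |pol s a * R' s a| ≤ ∑ a : A, pol s a * Rmax := by
          apply Finset.sum_le_sum; intro a _
          rw [abs_mul, abs_of_nonneg ((hpol s).1 a)]
          exact mul_le_mul_of_nonneg_left (hR' s a) ((hpol s).1 a)
      _ = Rmax := by rw [← Finset.sum_mul, (hpol s).2, one_mul]
  have hVV' : ∀ s, |V s - V' s| ≤ εR := by
    intro s
    have : V s - V' s = ∑ a : A, pol s a * (R s a - R' s a) := by
      rw [hV, hV', ← Finset.sum_sub_distrib]
      apply Finset.sum_congr rfl; intro a _; ring
    rw [this]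
    refine (Finset.abs_sum_le_sum_abs _ _).trans ?_
    calc ∑ a : A, |pol s a * (R s a - R' s a)| ≤ ∑ a : A, pol s a * εR := by
          apply Finset.sum_le_sum; intro a _
          rw [abs_mul, abs_of_nonneg ((hpol s).1 a)]
          exact mul_le_mul_of_nonneg_left (hRclose s a) ((hpol s).1 a)
      _ = εR := by rw [← Finset.sum_mul, (hpol s).2, one_mul]
  -- bounds on |f t| : summability
  have hEb : ∀ (Q : S → A → S → ℝ) (hQ : IsTransition Q) (W : S → ℝ)
      (hW : ∀ s, |W s| ≤ Rmax) (t : ℕ),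
      |∑ s : S, stateDist Q pol d0 t s * W s| ≤ Rmax := by
    intro Q hQ W hW t
    have hd := stateDist_prob Q pol d0 hQ hpol hd0 t
    refine (Finset.abs_sum_le_sum_abs _ _).trans ?_
    calc ∑ s : S, |stateDist Q pol d0 t s * W s|
        ≤ ∑ s : S, stateDist Q pol d0 t s * Rmax := by
          apply Finset.sum_le_sum; intro s _
          rw [abs_mul, abs_of_nonneg (hd.1 s)]
          exact mul_le_mul_of_nonneg_left (hW s) (hd.1 s)
      _ = Rmax := by rw [← Finset.sum_mul, hd.2, one_mul]
  have hsumf : Summable f := by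
    apply Summable.of_norm_bounded (g := fun t => Rmax * γ ^ t)
      ((summable_geometric_of_lt_one hγ0 hγ1).mul_left Rmax)
    intro t
    rw [Real.norm_eq_abs, hf, abs_mul, abs_pow, abs_of_nonneg hγ0, mul_comm Rmax]
    exact mul_le_mul_of_nonneg_left (hEb P hP V hVb t) (pow_nonneg hγ0 t)
  have hsumf' : Summable f' := by
    apply Summable.of_norm_bounded (g := fun t => Rmax * γ ^ t)
      ((summable_geometric_of_lt_one hγ0 hγ1).mul_left Rmax)
    intro t
    rw [Real.norm_eq_abs, hf', abs_mul, abs_pow, abs_of_nonneg hγ0, mul_comm Rmax]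
    exact mul_le_mul_of_nonneg_left (hEb P' hP' V' hV'b t) (pow_nonneg hγ0 t)
  -- pointwise bound on the difference
  have hdiff : ∀ t : ℕ, |f t - f' t|
      ≤ Rmax * εP * ((t : ℝ) * γ ^ t) + εR * γ ^ t := by
    intro t
    have hd' := stateDist_prob P' pol d0 hP' hpol hd0 t
    have hl1 := stateDist_l1 εP d0 hd0 P P' hP hP' hPclose pol hpol t
    have hsplit : f t - f' t
        = γ ^ t * ((∑ s : S, (stateDist P pol d0 t s - stateDist P' pol d0 t s) * V s)
            + ∑ s : S, stateDist P' pol d0 t s * (V s - V' s)) := by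
      rw [hf, hf', ← mul_sub]
      congr 1
      rw [← Finset.sum_add_distrib, ← Finset.sum_sub_distrib]
      apply Finset.sum_congr rfl; intro s _; ring
    rw [hsplit, abs_mul, abs_pow, abs_of_nonneg hγ0]
    have hb1 : |∑ s : S, (stateDist P pol d0 t s - stateDist P' pol d0 t s) * V s|
        ≤ Rmax * ((t : ℝ) * εP) := by
      refine (Finset.abs_sum_le_sum_abs _ _).trans ?_
      calc ∑ s : S, |(stateDist P pol d0 t s - stateDist P' pol d0 t s) * V s|
          ≤ ∑ s : S, |stateDist P pol d0 t s - stateDist P' pol d0 t s| * Rmax := by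
            apply Finset.sum_le_sum; intro s _
            rw [abs_mul]
            exact mul_le_mul_of_nonneg_left (hVb s) (abs_nonneg _)
        _ = (∑ s : S, |stateDist P pol d0 t s - stateDist P' pol d0 t s|) * Rmax := by
            rw [Finset.sum_mul]
        _ ≤ ((t : ℝ) * εP) * Rmax := mul_le_mul_of_nonneg_right hl1 hRm
        _ = Rmax * ((t : ℝ) * εP) := by ring
    have hb2 : |∑ s : S, stateDist P' pol d0 t s * (V s - V' s)| ≤ εR := by
      refine (Finset.abs_sum_le_sum_abs _ _).trans ?_
      calc ∑ s : S, |stateDist P' pol d0 t s * (V s - V' s)|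
          ≤ ∑ s : S, stateDist P' pol d0 t s * εR := by
            apply Finset.sum_le_sum; intro s _
            rw [abs_mul, abs_of_nonneg (hd'.1 s)]
            exact mul_le_mul_of_nonneg_left (hVV' s) (hd'.1 s)
        _ = εR := by rw [← Finset.sum_mul, hd'.2, one_mul]
    calc γ ^ t * |(∑ s : S, (stateDist P pol d0 t s - stateDist P' pol d0 t s) * V s)
            + ∑ s : S, stateDist P' pol d0 t s * (V s - V' s)|
        ≤ γ ^ t * (Rmax * ((t : ℝ) * εP) + εR) := by
          apply mul_le_mul_of_nonneg_left _ (pow_nonneg hγ0 t)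
          exact (abs_add_le _ _).trans (add_le_add hb1 hb2)
      _ = Rmax * εP * ((t : ℝ) * γ ^ t) + εR * γ ^ t := by ring
  -- summability of the bound
  have hsumt : Summable (fun t : ℕ => (t : ℝ) * γ ^ t) := by
    have := summable_pow_mul_geometric_of_norm_lt_one (R := ℝ) 1 hγn
    simpa using this
  have hsumg : Summable (fun t : ℕ => γ ^ t) := summable_geometric_of_lt_one hγ0 hγ1
  have hsumb : Summable (fun t : ℕ => Rmax * εP * ((t : ℝ) * γ ^ t) + εR * γ ^ t) :=
    (hsumt.mul_left _).add (hsumg.mul_left _)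
  -- put everything together
  have habs : Summable (fun t : ℕ => ‖f t - f' t‖) := by
    apply Summable.of_nonneg_of_le (fun t => norm_nonneg _) _ hsumb
    intro t
    rw [Real.norm_eq_abs]
    exact hdiff t
  have hperf : perf P R pol d0 γ - perf P' R' pol d0 γ = ∑' t : ℕ, (f t - f' t) := by
    rw [Summable.tsum_sub hsumf hsumf']
    rfl
  rw [hperf]
  calc |∑' t : ℕ, (f t - f' t)| ≤ ∑' t : ℕ, ‖f t - f' t‖ := by
        rw [← Real.norm_eq_abs]
        exact norm_tsum_le_tsum_norm habs
    _ ≤ ∑' t : ℕ, (Rmax * εP * ((t : ℝ) * γ ^ t) + εR * γ ^ t) := by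
        apply Summable.tsum_le_tsum _ habs hsumb
        intro t
        rw [Real.norm_eq_abs]
        exact hdiff t
    _ = Rmax * εP * (γ / (1 - γ) ^ 2) + εR * (1 - γ)⁻¹ := by
        rw [Summable.tsum_add (hsumt.mul_left _) (hsumg.mul_left _), tsum_mul_left, tsum_mul_left,
          tsum_coe_mul_geometric_of_norm_lt_one hγn, tsum_geometric_of_lt_one hγ0 hγ1]
    _ = γ * Rmax * εP / (1 - γ) ^ 2 + εR / (1 - γ) := by
        rw [div_eq_mul_inv εR]
        ring
end

section
/- Let S and A be finite sets, γ ∈ [0,1), d₀ a probability distribution on S, and let M and M' be two MDPs sharing S, A, γ, d₀, with transition functions P, P' and mean reward functions R, R' bounded in absolute value by Rmax. If for all s ∈ S and a ∈ A, |R(s,a) − R'(s,a)| ≤ ε_R, then for every policy π, (1−γ)·|ρ(π, M) − ρ(π, M')| ≤ Rmax · ∑_{s∈S} |d^π(s, M) − d^π(s, M')| + ε_R. -/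
open scoped BigOperators

/-- The discounted state occupancy `d^π(s, M) := (1−γ) ∑_{t=0}^∞ γ^t Pr(S_t = s)`. -/
noncomputable def occupancy {S A : Type*} [Fintype S] [Fintype A]
    (P : S → A → S → ℝ) (pol : S → A → ℝ) (d0 : S → ℝ) (γ : ℝ) (s : S) : ℝ :=
  (1 - γ) * ∑' t : ℕ, γ ^ t * stateDist P pol d0 t s

lemma stateDist_isDist {S A : Type*} [Fintype S] [Fintype A]
    (P : S → A → S → ℝ) (pol : S → A → ℝ) (d0 : S → ℝ)
    (hP : IsTransition P) (hpol : IsPolicy pol) (hd0 : IsDist d0) :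
    ∀ t, IsDist (stateDist P pol d0 t) := by
  intro t
  induction t with
  | zero => exact hd0
  | succ t ih =>
    constructor
    · intro s'
      apply Finset.sum_nonneg; intro s _
      apply Finset.sum_nonneg; intro a _
      exact mul_nonneg (mul_nonneg (ih.1 s) ((hpol s).1 a)) ((hP s a).1 s')
    · show ∑ s' : S, ∑ s : S, ∑ a : A, stateDist P pol d0 t s * pol s a * P s a s' = 1
      rw [Finset.sum_comm]
      have : ∀ s : S, ∑ s' : S, ∑ a : A, stateDist P pol d0 t s * pol s a * P s a s'
          = stateDist P pol d0 t s := by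
        intro s
        rw [Finset.sum_comm]
        calc ∑ a : A, ∑ s' : S, stateDist P pol d0 t s * pol s a * P s a s'
            = ∑ a : A, stateDist P pol d0 t s * pol s a := by
              apply Finset.sum_congr rfl; intro a _
              rw [← Finset.mul_sum, (hP s a).2, mul_one]
          _ = stateDist P pol d0 t s := by
              rw [← Finset.mul_sum, (hpol s).2, mul_one]
      simp only [this, ih.2]


section Aux
variable {S A : Type*} [Fintype S] [Fintype A]
  {γ : ℝ} (hγ0 : 0 ≤ γ) (hγ1 : γ < 1)
  {P : S → A → S → ℝ} {pol : S → A → ℝ} {d0 : S → ℝ}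
  (hP : IsTransition P) (hpol : IsPolicy pol) (hd0 : IsDist d0)
include hγ0 hγ1 hP hpol hd0

lemma summable_aux (s : S) :
    Summable (fun t : ℕ => γ ^ t * stateDist P pol d0 t s) := by
  apply Summable.of_nonneg_of_le
    (fun t => mul_nonneg (pow_nonneg hγ0 t) ((stateDist_isDist P pol d0 hP hpol hd0 t).1 s))
    (fun t => ?_) (summable_geometric_of_lt_one hγ0 hγ1)
  have hd := stateDist_isDist P pol d0 hP hpol hd0 t
  have hle : stateDist P pol d0 t s ≤ 1 := by
    rw [← hd.2]
    exact Finset.single_le_sum (fun i _ => hd.1 i) (Finset.mem_univ s)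
  calc γ ^ t * stateDist P pol d0 t s ≤ γ ^ t * 1 :=
        mul_le_mul_of_nonneg_left hle (pow_nonneg hγ0 t)
    _ = γ ^ t := mul_one _

lemma perf_eq (R : S → A → ℝ) :
    (1 - γ) * perf P R pol d0 γ =
      ∑ s : S, occupancy P pol d0 γ s * (∑ a : A, pol s a * R s a) := by
  have hs : ∀ s : S, Summable (fun t : ℕ =>
      γ ^ t * stateDist P pol d0 t s * (∑ a : A, pol s a * R s a)) :=
    fun s => (summable_aux hγ0 hγ1 hP hpol hd0 s).mul_right _
  have h1 : perf P R pol d0 γ =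
      ∑ s : S, (∑' t : ℕ, γ ^ t * stateDist P pol d0 t s) * (∑ a : A, pol s a * R s a) := by
    rw [perf]
    rw [show (fun t : ℕ => γ ^ t * ∑ s : S, stateDist P pol d0 t s * ∑ a : A, pol s a * R s a)
        = fun t : ℕ => ∑ s : S, γ ^ t * stateDist P pol d0 t s * (∑ a : A, pol s a * R s a) from
      funext fun t => by rw [Finset.mul_sum]; exact Finset.sum_congr rfl fun s _ => by ring]
    rw [Summable.tsum_finsetSum (fun s _ => hs s)]
    exact Finset.sum_congr rfl fun s _ => (tsum_mul_right)
  rw [h1, Finset.mul_sum]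
  exact Finset.sum_congr rfl fun s _ => by rw [occupancy]; ring

lemma occupancy_nonneg (s : S) : 0 ≤ occupancy P pol d0 γ s := by
  apply mul_nonneg (by linarith)
  exact tsum_nonneg fun t => mul_nonneg (pow_nonneg hγ0 t)
    ((stateDist_isDist P pol d0 hP hpol hd0 t).1 s)

lemma occupancy_sum : ∑ s : S, occupancy P pol d0 γ s = 1 := by
  have : ∑ s : S, occupancy P pol d0 γ s
      = (1 - γ) * ∑' t : ℕ, ∑ s : S, γ ^ t * stateDist P pol d0 t s := by
    rw [Summable.tsum_finsetSum (fun s _ => summable_aux hγ0 hγ1 hP hpol hd0 s), Finset.mul_sum]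
    rfl
  rw [this]
  have : ∀ t : ℕ, ∑ s : S, γ ^ t * stateDist P pol d0 t s = γ ^ t := fun t => by
    rw [← Finset.mul_sum, (stateDist_isDist P pol d0 hP hpol hd0 t).2, mul_one]
  simp only [this, tsum_geometric_of_lt_one hγ0 hγ1]
  field_simp
  exact div_self (by linarith)

end Aux

lemma abs_convex_comb {S A : Type*} [Fintype A] (pol : S → A → ℝ)
    (hpol : IsPolicy pol) (s : S) (f : A → ℝ) (C : ℝ) (hf : ∀ a, |f a| ≤ C) :
    |∑ a : A, pol s a * f a| ≤ C := by
  calc |∑ a : A, pol s a * f a| ≤ ∑ a : A, |pol s a * f a| :=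
        Finset.abs_sum_le_sum_abs _ _
    _ = ∑ a : A, pol s a * |f a| := by
        refine Finset.sum_congr rfl fun a _ => ?_
        rw [abs_mul, abs_of_nonneg ((hpol s).1 a)]
    _ ≤ ∑ a : A, pol s a * C :=
        Finset.sum_le_sum fun a _ => mul_le_mul_of_nonneg_left (hf a) ((hpol s).1 a)
    _ = C := by rw [← Finset.sum_mul, (hpol s).2, one_mul]


/-- If the mean rewards of `M` and `M'` are within `εR`, then
`(1−γ)·|ρ(π,M) − ρ(π,M')| ≤ Rmax·∑_s |d^π(s,M) − d^π(s,M')| + εR`. -/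
theorem perf_diff_occupancy_bound
    {S A : Type*} [Fintype S] [Fintype A]
    (γ Rmax εR : ℝ) (hγ0 : 0 ≤ γ) (hγ1 : γ < 1)
    (d0 : S → ℝ) (hd0 : IsDist d0)
    (P P' : S → A → S → ℝ) (R R' : S → A → ℝ)
    (hP : IsTransition P) (hP' : IsTransition P')
    (hR : ∀ s a, |R s a| ≤ Rmax) (hR' : ∀ s a, |R' s a| ≤ Rmax)
    (hRclose : ∀ s a, |R s a - R' s a| ≤ εR)
    (pol : S → A → ℝ) (hpol : IsPolicy pol) :
    (1 - γ) * |perf P R pol d0 γ - perf P' R' pol d0 γ| ≤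
      Rmax * ∑ s : S, |occupancy P pol d0 γ s - occupancy P' pol d0 γ s| + εR := by
  have hS : Nonempty S := by
    by_contra h
    rw [not_nonempty_iff] at h
    have := hd0.2
    simp at this
  set r : S → ℝ := fun s => ∑ a : A, pol s a * R s a with hr
  set r' : S → ℝ := fun s => ∑ a : A, pol s a * R' s a with hr'
  set o : S → ℝ := occupancy P pol d0 γ with ho
  set o' : S → ℝ := occupancy P' pol d0 γ with ho'
  have hrb : ∀ s, |r s| ≤ Rmax := fun s => abs_convex_comb pol hpol s _ _ (hR s)
  have hrd : ∀ s, |r s - r' s| ≤ εR := by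
    intro s
    have : r s - r' s = ∑ a : A, pol s a * (R s a - R' s a) := by
      simp [hr, hr', ← Finset.sum_sub_distrib, mul_sub]
    rw [this]
    exact abs_convex_comb pol hpol s _ _ (hRclose s)
  have hεR : 0 ≤ εR := le_trans (abs_nonneg _) (hrd (Classical.arbitrary S))
  have key : (1 - γ) * (perf P R pol d0 γ - perf P' R' pol d0 γ)
      = ∑ s : S, ((o s - o' s) * r s + o' s * (r s - r' s)) := by
    rw [mul_sub, perf_eq hγ0 hγ1 hP hpol hd0 R, perf_eq hγ0 hγ1 hP' hpol hd0 R',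
      ← Finset.sum_sub_distrib]
    exact Finset.sum_congr rfl fun s _ => by ring
  have h1γ : 0 ≤ 1 - γ := by linarith
  calc (1 - γ) * |perf P R pol d0 γ - perf P' R' pol d0 γ|
      = |(1 - γ) * (perf P R pol d0 γ - perf P' R' pol d0 γ)| := by
        rw [abs_mul, abs_of_nonneg h1γ]
    _ = |∑ s : S, ((o s - o' s) * r s + o' s * (r s - r' s))| := by rw [key]
    _ ≤ ∑ s : S, |((o s - o' s) * r s + o' s * (r s - r' s))| :=
        Finset.abs_sum_le_sum_abs _ _
    _ ≤ ∑ s : S, (|o s - o' s| * Rmax + o' s * εR) := by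
        refine Finset.sum_le_sum fun s _ => ?_
        refine le_trans (abs_add_le _ _) (add_le_add ?_ ?_)
        · rw [abs_mul]
          exact mul_le_mul_of_nonneg_left (hrb s) (abs_nonneg _)
        · rw [abs_mul, abs_of_nonneg (occupancy_nonneg hγ0 hγ1 hP' hpol hd0 s)]
          exact mul_le_mul_of_nonneg_left (hrd s)
            (occupancy_nonneg hγ0 hγ1 hP' hpol hd0 s)
    _ = Rmax * ∑ s : S, |o s - o' s| + εR := by
        rw [Finset.sum_add_distrib, ← Finset.sum_mul, ← Finset.sum_mul,
          occupancy_sum hγ0 hγ1 hP' hpol hd0, one_mul, mul_comm]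
end

section
/- Let S and A be finite sets, γ ∈ [0,1), d₀ a probability distribution on S, and let M and M' be two MDPs sharing S, A, γ, d₀ with transition functions P and P'. For a policy π, let P^π ∈ ℝ^{|S|×|S|} be the matrix with entries P^π(s', s) := ∑_{a∈A} π(a|s)·P(s'|s,a), and define P'^π analogously from P'. Let d^π(·, M) ∈ ℝ^{|S|} denote the vector of discounted state occupancies under P. Then ∑_{s∈S} |d^π(s, M) − d^π(s, M')| ≤ γ·(1−γ)^{-1} · ‖(P^π − P'^π) d^π(·, M)‖₁. -/
open scoped BigOperators

/-- The policy-averaged transition matrix `P^π(s', s) := ∑_a π(a|s)·P(s'|s,a)`. -/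
noncomputable def polMatrix {S A : Type*} [Fintype A]
    (P : S → A → S → ℝ) (pol : S → A → ℝ) : Matrix S S ℝ :=
  Matrix.of fun s' s => ∑ a : A, pol s a * P s a s'

section lemmas
variable {S A : Type*} [Fintype S] [Fintype A]
variable {P : S → A → S → ℝ} {pol : S → A → ℝ} {d0 : S → ℝ}

lemma sd_nonneg (hP : IsTransition P) (hpol : IsPolicy pol) (hd0 : IsDist d0) :
    ∀ t (s : S), 0 ≤ stateDist P pol d0 t s
  | 0, s => hd0.1 s
  | (t+1), s' => by
    refine Finset.sum_nonneg fun s _ => Finset.sum_nonneg fun a _ => ?_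
    exact mul_nonneg (mul_nonneg (sd_nonneg hP hpol hd0 t s) ((hpol s).1 a)) ((hP s a).1 s')

lemma sd_sum_one (hP : IsTransition P) (hpol : IsPolicy pol) (hd0 : IsDist d0) :
    ∀ t, ∑ s : S, stateDist P pol d0 t s = 1
  | 0 => hd0.2
  | (t+1) => by
    have : ∀ s' : S, stateDist P pol d0 (t+1) s'
        = ∑ s : S, ∑ a : A, stateDist P pol d0 t s * pol s a * P s a s' := fun _ => rfl
    simp only [this]
    rw [Finset.sum_comm]
    have h1 : ∀ s : S, ∑ s' : S, ∑ a : A, stateDist P pol d0 t s * pol s a * P s a s'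
        = stateDist P pol d0 t s := by
      intro s
      rw [Finset.sum_comm]
      have : ∀ a : A, ∑ s' : S, stateDist P pol d0 t s * pol s a * P s a s'
          = stateDist P pol d0 t s * pol s a := by
        intro a
        rw [← Finset.mul_sum, (hP s a).2, mul_one]
      simp only [this, ← Finset.mul_sum, (hpol s).2, mul_one]
    simp only [h1]
    exact sd_sum_one hP hpol hd0 t

lemma sd_le_one (hP : IsTransition P) (hpol : IsPolicy pol) (hd0 : IsDist d0)
    (t : ℕ) (s : S) : stateDist P pol d0 t s ≤ 1 := by
  calc stateDist P pol d0 t s ≤ ∑ s' : S, stateDist P pol d0 t s' :=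
        Finset.single_le_sum (fun s' _ => sd_nonneg hP hpol hd0 t s') (Finset.mem_univ s)
    _ = 1 := sd_sum_one hP hpol hd0 t

lemma summable_sd {γ : ℝ} (hγ0 : 0 ≤ γ) (hγ1 : γ < 1)
    (hP : IsTransition P) (hpol : IsPolicy pol) (hd0 : IsDist d0) (s : S) :
    Summable (fun t : ℕ => γ ^ t * stateDist P pol d0 t s) := by
  refine Summable.of_nonneg_of_le
    (fun t => mul_nonneg (pow_nonneg hγ0 t) (sd_nonneg hP hpol hd0 t s))
    (fun t => ?_) (summable_geometric_of_lt_one hγ0 hγ1)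
  calc γ ^ t * stateDist P pol d0 t s ≤ γ ^ t * 1 :=
        mul_le_mul_of_nonneg_left (sd_le_one hP hpol hd0 t s) (pow_nonneg hγ0 t)
    _ = γ ^ t := mul_one _

lemma occupancy_fixed {γ : ℝ} (hγ0 : 0 ≤ γ) (hγ1 : γ < 1)
    (hP : IsTransition P) (hpol : IsPolicy pol) (hd0 : IsDist d0) (s' : S) :
    occupancy P pol d0 γ s' = (1 - γ) * d0 s'
      + γ * ∑ s : S, polMatrix P pol s' s * occupancy P pol d0 γ s := by
  have hsum := summable_sd hγ0 hγ1 hP hpol hd0 (P := P) (pol := pol) (d0 := d0) s'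
  have key : ∀ t : ℕ, γ ^ (t+1) * stateDist P pol d0 (t+1) s'
      = ∑ s : S, γ * (polMatrix P pol s' s * (γ ^ t * stateDist P pol d0 t s)) := by
    intro t
    have h1 : stateDist P pol d0 (t+1) s'
        = ∑ s : S, polMatrix P pol s' s * stateDist P pol d0 t s := by
      show ∑ s : S, ∑ a : A, stateDist P pol d0 t s * pol s a * P s a s' = _
      refine Finset.sum_congr rfl fun s _ => ?_
      rw [polMatrix, Matrix.of_apply, Finset.sum_mul]
      exact Finset.sum_congr rfl fun a _ => by ring
    rw [h1, Finset.mul_sum]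
    refine Finset.sum_congr rfl fun s _ => by ring
  have hsum2 : ∀ s : S, Summable (fun t : ℕ =>
      γ * (polMatrix P pol s' s * (γ ^ t * stateDist P pol d0 t s))) := by
    intro s
    exact ((summable_sd hγ0 hγ1 hP hpol hd0 s).mul_left _).mul_left _
  have swap : (∑' t : ℕ, γ ^ (t+1) * stateDist P pol d0 (t+1) s')
      = ∑ s : S, γ * polMatrix P pol s' s * ∑' t : ℕ, γ ^ t * stateDist P pol d0 t s := by
    calc (∑' t : ℕ, γ ^ (t+1) * stateDist P pol d0 (t+1) s')
        = ∑' t : ℕ, ∑ s : S, γ * (polMatrix P pol s' s * (γ ^ t * stateDist P pol d0 t s)) := by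
          exact tsum_congr key
      _ = ∑ s : S, ∑' t : ℕ, γ * (polMatrix P pol s' s * (γ ^ t * stateDist P pol d0 t s)) := by
          exact Summable.tsum_finsetSum (fun s _ => hsum2 s)
      _ = ∑ s : S, γ * polMatrix P pol s' s * ∑' t : ℕ, γ ^ t * stateDist P pol d0 t s := by
          refine Finset.sum_congr rfl fun s _ => ?_
          rw [tsum_mul_left, tsum_mul_left, mul_assoc]
  have expand : occupancy P pol d0 γ s' = (1 - γ) * (stateDist P pol d0 0 s'
      + ∑' t : ℕ, γ ^ (t+1) * stateDist P pol d0 (t+1) s') := by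
    rw [occupancy, Summable.tsum_eq_zero_add hsum, pow_zero, one_mul]
  rw [expand, swap]
  have : stateDist P pol d0 0 s' = d0 s' := rfl
  rw [this, mul_add]
  congr 1
  rw [Finset.mul_sum, Finset.mul_sum]
  refine Finset.sum_congr rfl fun s _ => ?_
  rw [occupancy]; ring

end lemmas

/-- The L1 distance between the discounted state occupancies of two MDPs `M` and `M'`
(sharing everything but the transition functions `P` and `P'`) is bounded by
`γ·(1−γ)⁻¹·‖(P^π − P'^π) d^π(·, M)‖₁`. -/
theorem occupancy_diff_matrix_bound
    {S A : Type*} [Fintype S] [Fintype A]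
    (γ : ℝ) (hγ0 : 0 ≤ γ) (hγ1 : γ < 1)
    (d0 : S → ℝ) (hd0 : IsDist d0)
    (P P' : S → A → S → ℝ)
    (hP : IsTransition P) (hP' : IsTransition P')
    (pol : S → A → ℝ) (hpol : IsPolicy pol) :
    ∑ s : S, |occupancy P pol d0 γ s - occupancy P' pol d0 γ s| ≤
      γ * (1 - γ)⁻¹ *
        ∑ s' : S, |((polMatrix P pol - polMatrix P' pol).mulVec
          (occupancy P pol d0 γ)) s'| := by
  set d := occupancy P pol d0 γ with hd
  set d' := occupancy P' pol d0 γ with hd'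
  set M := polMatrix P pol with hM
  set M' := polMatrix P' pol with hM'
  set e : S → ℝ := fun s => d s - d' s with he
  set X : ℝ := ∑ s' : S, |((M - M').mulVec d) s'| with hX
  set E : ℝ := ∑ s : S, |e s| with hE
  -- key recursion for the error vector
  have hrec : ∀ s' : S, e s' = γ * ∑ s : S, M' s' s * e s + γ * ((M - M').mulVec d) s' := by
    intro s'
    have h1 := occupancy_fixed hγ0 hγ1 hP hpol hd0 (pol := pol) s'
    have h2 := occupancy_fixed hγ0 hγ1 hP' hpol hd0 (pol := pol) s'
    have hmv : ((M - M').mulVec d) s' = ∑ s : S, (M s' s - M' s' s) * d s := by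
      simp [Matrix.mulVec, dotProduct, Matrix.sub_apply]
    have hterm : ∀ s : S, M s' s * d s - M' s' s * d' s
        = M' s' s * e s + (M s' s - M' s' s) * d s := by
      intro s; simp only [he]; ring
    have hthis : e s' = γ * ∑ s : S, M s' s * d s - γ * ∑ s : S, M' s' s * d' s := by
      simp only [he, ← hd, ← hd'] at h1 h2 ⊢
      rw [h1, h2]; ring
    rw [hthis, hmv, ← mul_sub, ← Finset.sum_sub_distrib]
    simp only [hterm]
    rw [Finset.sum_add_distrib, mul_add]
  -- column sums of M' are 1, entries nonneg
  have hM'nn : ∀ s' s : S, 0 ≤ M' s' s := fun s' s =>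
    Finset.sum_nonneg fun a _ => mul_nonneg ((hpol s).1 a) ((hP' s a).1 s')
  have hM'col : ∀ s : S, ∑ s' : S, M' s' s = 1 := by
    intro s
    simp only [hM', polMatrix, Matrix.of_apply]
    rw [Finset.sum_comm]
    have : ∀ a : A, ∑ s' : S, pol s a * P' s a s' = pol s a := by
      intro a; rw [← Finset.mul_sum, (hP' s a).2, mul_one]
    simp only [this, (hpol s).2]
  -- L1 bound: E ≤ γ E + γ X
  have hEbound : E ≤ γ * E + γ * X := by
    have step : ∀ s' : S, |e s'| ≤ γ * ∑ s : S, M' s' s * |e s| + γ * |((M - M').mulVec d) s'| := by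
      intro s'
      rw [hrec s']
      calc |γ * ∑ s : S, M' s' s * e s + γ * ((M - M').mulVec d) s'|
          ≤ |γ * ∑ s : S, M' s' s * e s| + |γ * ((M - M').mulVec d) s'| := abs_add_le _ _
        _ ≤ γ * ∑ s : S, M' s' s * |e s| + γ * |((M - M').mulVec d) s'| := by
            gcongr
            · rw [abs_mul, abs_of_nonneg hγ0]
              gcongr
              calc |∑ s : S, M' s' s * e s| ≤ ∑ s : S, |M' s' s * e s| :=
                    Finset.abs_sum_le_sum_abs _ _
                _ = ∑ s : S, M' s' s * |e s| := by
                    refine Finset.sum_congr rfl fun s _ => ?_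
                    rw [abs_mul, abs_of_nonneg (hM'nn s' s)]
            · rw [abs_mul, abs_of_nonneg hγ0]
    calc E ≤ ∑ s' : S, (γ * ∑ s : S, M' s' s * |e s| + γ * |((M - M').mulVec d) s'|) :=
          Finset.sum_le_sum fun s' _ => step s'
      _ = γ * ∑ s' : S, ∑ s : S, M' s' s * |e s| + γ * X := by
          rw [Finset.sum_add_distrib, ← Finset.mul_sum, ← Finset.mul_sum]
      _ = γ * E + γ * X := by
          congr 1
          rw [Finset.sum_comm]
          congr 1
          refine Finset.sum_congr rfl fun s _ => ?_
          rw [← Finset.sum_mul, hM'col s, one_mul]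
  -- conclude
  have hpos : (0:ℝ) < 1 - γ := by linarith
  have h1 : (1 - γ) * E ≤ γ * X := by linarith
  calc E = (1 - γ)⁻¹ * ((1 - γ) * E) := by field_simp
    _ ≤ (1 - γ)⁻¹ * (γ * X) := by
        exact mul_le_mul_of_nonneg_left h1 (le_of_lt (inv_pos.mpr hpos))
    _ = γ * (1 - γ)⁻¹ * X := by ring
end

section
/- Let M be a finite MDP with state set S, action set A, transition function P, mean reward function R, discount factor γ ∈ [0,1), start-state distribution d₀, and fixed horizon T. Let β and π be two policies such that β has full support: there exists C > 0 with β(a|s) ≥ C for all s ∈ S, a ∈ A. Let H = (S₀, A₀, R₀, …, S_{T−1}, A_{T−1}, R_{T−1}) be a trajectory generated by running β in M (S₀ ∼ d₀, A_t ∼ β(·|S_t), S_{t+1} ∼ P(·|S_t, A_t), with E[R_t | S_t, A_t] = R(S_t, A_t)). Then the per-decision importance sampling estimator is unbiased for π's finite-horizon performance: E_β[ ∑_{t=0}^{T−1} ( ∏_{l=0}^{t} π(A_l|S_l)/β(A_l|S_l) ) γ^t R_t ] = E_π[ ∑_{t=0}^{T−1} γ^t R_t ], where the right-hand expectation is over trajectories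 generated by running π in M. -/
open scoped BigOperators

/-- The probability of a horizon-`T` trajectory `(S₀, A₀, S₁, A₁, …, S_{T−1}, A_{T−1}, S_T)`
when running policy `pol` from start-state distribution `d0` in an MDP with transition
function `P`:  `d₀(S₀) · ∏_{t<T} π(A_t|S_t) · P(S_{t+1}|S_t, A_t)`. -/
noncomputable def trajProb {S A : Type*} {T : ℕ}
    (P : S → A → S → ℝ) (pol : S → A → ℝ) (d0 : S → ℝ)
    (s : Fin (T + 1) → S) (a : Fin T → A) : ℝ :=
  d0 (s 0) * ∏ t : Fin T, (pol (s t.castSucc) (a t) * P (s t.castSucc) (a t) (s t.succ))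


section Aux

variable {S A : Type*} [Fintype S] [Fintype A]

lemma sum_fn_cons {n : ℕ} {X : Type*} [Fintype X] (g : (Fin (n+1) → X) → ℝ) :
    ∑ f : Fin (n+1) → X, g f = ∑ x : X, ∑ f : Fin n → X, g (Fin.cons x f) := by
  rw [← (Fin.consEquiv (fun _ : Fin (n+1) => X)).sum_comp g, Fintype.sum_prod_type]
  rfl

noncomputable def chainE (T : ℕ) (d : S → ℝ) (w : Fin T → S → A → S → ℝ)
    (F : (Fin (T+1) → S) → (Fin T → A) → ℝ) : ℝ :=
  ∑ s : Fin (T+1) → S, ∑ a : Fin T → A,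
    d (s 0) * (∏ l : Fin T, w l (s l.castSucc) (a l) (s l.succ)) * F s a

lemma chainE_succ (T : ℕ) (d : S → ℝ) (w : Fin (T+1) → S → A → S → ℝ)
    (F : (Fin (T+2) → S) → (Fin (T+1) → A) → ℝ) :
    chainE (T+1) d w F = ∑ x : S, ∑ b : A, d x *
      chainE T (fun y => w 0 x b y) (fun l => w l.succ)
        (fun f g => F (Fin.cons x f) (Fin.cons b g)) := by
  unfold chainE
  rw [sum_fn_cons (fun s : Fin (T+2) → S => ∑ a : Fin (T+1) → A,
    d (s 0) * (∏ l : Fin (T+1), w l (s l.castSucc) (a l) (s l.succ)) * F s a)]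
  refine Finset.sum_congr rfl fun x _ => ?_
  calc ∑ f : Fin (T+1) → S, ∑ a : Fin (T+1) → A,
        d ((Fin.cons x f : Fin (T+2) → S) 0) *
          (∏ l : Fin (T+1), w l ((Fin.cons x f : Fin (T+2) → S) l.castSucc) (a l)
            ((Fin.cons x f : Fin (T+2) → S) l.succ)) * F (Fin.cons x f) a
      = ∑ f : Fin (T+1) → S, ∑ b : A, ∑ g : Fin T → A,
        d ((Fin.cons x f : Fin (T+2) → S) 0) *
          (∏ l : Fin (T+1), w l ((Fin.cons x f : Fin (T+2) → S) l.castSucc)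
            ((Fin.cons b g : Fin (T+1) → A) l)
            ((Fin.cons x f : Fin (T+2) → S) l.succ)) * F (Fin.cons x f) (Fin.cons b g) := by
        exact Finset.sum_congr rfl fun f _ => sum_fn_cons _
    _ = ∑ b : A, ∑ f : Fin (T+1) → S, ∑ g : Fin T → A,
        d ((Fin.cons x f : Fin (T+2) → S) 0) *
          (∏ l : Fin (T+1), w l ((Fin.cons x f : Fin (T+2) → S) l.castSucc)
            ((Fin.cons b g : Fin (T+1) → A) l)
            ((Fin.cons x f : Fin (T+2) → S) l.succ)) * F (Fin.cons x f) (Fin.cons b g) :=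
        Finset.sum_comm
    _ = _ := by
        refine Finset.sum_congr rfl fun b _ => ?_
        rw [Finset.mul_sum]
        refine Finset.sum_congr rfl fun f _ => ?_
        rw [Finset.mul_sum]
        refine Finset.sum_congr rfl fun g _ => ?_
        rw [Fin.prod_univ_succ]
        simp only [Fin.cons_zero, Fin.castSucc_zero, Fin.succ_zero_eq_one,
          ← Fin.succ_castSucc, Fin.cons_succ, Fin.cons_zero]
        have h1 : (Fin.cons x f : Fin (T+2) → S) 1 = f 0 := by
          rw [show (1 : Fin (T+2)) = Fin.succ 0 from rfl, Fin.cons_succ]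
        rw [h1]
        ring

lemma chainE_one : ∀ (T : ℕ) (d : S → ℝ) (w : Fin T → S → A → S → ℝ),
    (∀ l s, ∑ a : A, ∑ s' : S, w l s a s' = 1) →
    chainE T d w (fun _ _ => 1) = ∑ s : S, d s := by
  intro T
  induction T with
  | zero =>
    intro d w _
    unfold chainE
    rw [sum_fn_cons (fun f : Fin 1 → S => ∑ a : Fin 0 → A,
      d (f 0) * (∏ l : Fin 0, w l (f l.castSucc) (a l) (f l.succ)) * 1)]
    simp
  | succ T ih =>
    intro d w hw
    rw [chainE_succ]
    have : ∀ x : S, ∀ b : A,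
        chainE T (fun y => w 0 x b y) (fun l => w l.succ)
          (fun _ _ => (1:ℝ)) = ∑ y : S, w 0 x b y := by
      intro x b
      exact ih _ _ (fun l s => hw l.succ s)
    calc ∑ x : S, ∑ b : A, d x * chainE T (fun y => w 0 x b y) (fun l => w l.succ)
          (fun _ _ => (1:ℝ))
        = ∑ x : S, ∑ b : A, d x * ∑ y : S, w 0 x b y := by
          exact Finset.sum_congr rfl fun x _ => Finset.sum_congr rfl fun b _ => by rw [this]
      _ = ∑ x : S, d x * ∑ b : A, ∑ y : S, w 0 x b y := by
          exact Finset.sum_congr rfl fun x _ => (Finset.mul_sum _ _ _).symm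
      _ = ∑ x : S, d x := by
          refine Finset.sum_congr rfl fun x _ => ?_
          rw [hw 0 x, mul_one]

lemma chainE_const (T : ℕ) (d : S → ℝ) (w : Fin T → S → A → S → ℝ) (c : ℝ) :
    chainE T d w (fun _ _ => c) = c * chainE T d w (fun _ _ => 1) := by
  unfold chainE
  rw [Finset.mul_sum]
  refine Finset.sum_congr rfl fun s _ => ?_
  rw [Finset.mul_sum]
  exact Finset.sum_congr rfl fun a _ => by ring

lemma chainE_eq : ∀ (T : ℕ) (t : Fin T) (d : S → ℝ)
    (w w' : Fin T → S → A → S → ℝ) (R : S → A → ℝ),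
    (∀ l, l ≤ t → w l = w' l) →
    (∀ l, t < l → ∀ s, ∑ a : A, ∑ s' : S, w l s a s' = 1) →
    (∀ l, t < l → ∀ s, ∑ a : A, ∑ s' : S, w' l s a s' = 1) →
    chainE T d w (fun s a => R (s t.castSucc) (a t)) =
      chainE T d w' (fun s a => R (s t.castSucc) (a t)) := by
  intro T
  induction T with
  | zero => exact fun t => t.elim0
  | succ T ih =>
    intro t d w w' R hagree hw hw'
    have h0 : w 0 = w' 0 := hagree 0 (Fin.zero_le t)
    induction t using Fin.cases with
    | zero =>
      rw [chainE_succ, chainE_succ]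
      refine Finset.sum_congr rfl fun x _ => Finset.sum_congr rfl fun b _ => ?_
      simp only [Fin.castSucc_zero, Fin.cons_zero]
      conv_lhs => rw [chainE_const, chainE_one T _ _ (fun l s => hw l.succ (Fin.succ_pos l) s)]
      conv_rhs => rw [chainE_const, chainE_one T _ _ (fun l s => hw' l.succ (Fin.succ_pos l) s)]
      rw [h0]
    | succ j =>
      rw [chainE_succ, chainE_succ]
      refine Finset.sum_congr rfl fun x _ => Finset.sum_congr rfl fun b _ => ?_
      simp only [← Fin.succ_castSucc, Fin.cons_succ]
      rw [h0]
      congr 1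
      exact ih j _ (fun l => w l.succ) (fun l => w' l.succ) R
        (fun l hl => hagree l.succ (Fin.succ_le_succ_iff.mpr hl))
        (fun l hl s => hw l.succ (Fin.succ_lt_succ_iff.mpr hl) s)
        (fun l hl s => hw' l.succ (Fin.succ_lt_succ_iff.mpr hl) s)

end Aux

/-- **Unbiasedness of per-decision importance sampling**: if the behavior policy `β` has
full support (`β(a|s) ≥ C > 0` for all `s, a`), then the expectation under trajectories
generated by `β` of `∑_{t<T} ( ∏_{l≤t} π(A_l|S_l)/β(A_l|S_l) ) γ^t R(S_t, A_t)` equals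
the expectation under trajectories generated by `π` of `∑_{t<T} γ^t R(S_t, A_t)`, i.e.
the finite-horizon performance of `π`. -/
theorem pdis_unbiased
    {S A : Type*} [Fintype S] [Fintype A] [DecidableEq S] [DecidableEq A]
    (T : ℕ) (γ : ℝ) (hγ0 : 0 ≤ γ) (hγ1 : γ < 1)
    (P : S → A → S → ℝ) (hP : IsTransition P)
    (R : S → A → ℝ)
    (d0 : S → ℝ) (hd0 : IsDist d0)
    (π β : S → A → ℝ) (hπ : IsPolicy π) (hβ : IsPolicy β)
    (hsupp : ∃ C > (0 : ℝ), ∀ s a, C ≤ β s a) :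
    ∑ s : Fin (T + 1) → S, ∑ a : Fin T → A,
      trajProb P β d0 s a *
        ∑ t : Fin T,
          (∏ l ∈ Finset.Iic t, π (s l.castSucc) (a l) / β (s l.castSucc) (a l)) *
            γ ^ (t : ℕ) * R (s t.castSucc) (a t) =
    ∑ s : Fin (T + 1) → S, ∑ a : Fin T → A,
      trajProb P π d0 s a * ∑ t : Fin T, γ ^ (t : ℕ) * R (s t.castSucc) (a t) := by
  obtain ⟨C, hC, hCβ⟩ := hsupp
  have hβpos : ∀ s a, 0 < β s a := fun s a => lt_of_lt_of_le hC (hCβ s a)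
  set wπ : Fin T → S → A → S → ℝ := fun _ s a s' => π s a * P s a s' with hwπ
  set wmix : Fin T → Fin T → S → A → S → ℝ :=
    fun t l s a s' => (if l ≤ t then π else β) s a * P s a s' with hwmix
  have hnormπ : ∀ (l : Fin T) s, ∑ a : A, ∑ s' : S, wπ l s a s' = 1 := by
    intro l s
    have h1 : ∀ a : A, ∑ s' : S, π s a * P s a s' = π s a := fun a => by
      rw [← Finset.mul_sum, (hP s a).2, mul_one]
    simp only [hwπ, h1]
    exact (hπ s).2
  have hnormmix : ∀ (t l : Fin T), t < l → ∀ s, ∑ a : A, ∑ s' : S, wmix t l s a s' = 1 := by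
    intro t l hl s
    have hlt : ¬ l ≤ t := not_le.mpr hl
    have h1 : ∀ a : A, ∑ s' : S, wmix t l s a s' = β s a := fun a => by
      simp only [hwmix, if_neg hlt, ← Finset.mul_sum, (hP s a).2, mul_one]
    simp only [h1]
    exact (hβ s).2
  have hswap : ∀ (f : (Fin (T+1) → S) → (Fin T → A) → Fin T → ℝ),
      (∑ s : Fin (T+1) → S, ∑ a : Fin T → A, ∑ t : Fin T, f s a t) =
      ∑ t : Fin T, ∑ s : Fin (T+1) → S, ∑ a : Fin T → A, f s a t := by
    intro f
    calc ∑ s : Fin (T+1) → S, ∑ a : Fin T → A, ∑ t : Fin T, f s a t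
        = ∑ s : Fin (T+1) → S, ∑ t : Fin T, ∑ a : Fin T → A, f s a t :=
          Finset.sum_congr rfl fun s _ => Finset.sum_comm
      _ = _ := Finset.sum_comm
  have hpoint : ∀ (t : Fin T) (s : Fin (T+1) → S) (a : Fin T → A),
      trajProb P β d0 s a *
        (∏ l ∈ Finset.Iic t, π (s l.castSucc) (a l) / β (s l.castSucc) (a l)) =
      d0 (s 0) * ∏ l : Fin T, wmix t l (s l.castSucc) (a l) (s l.succ) := by
    intro t s a
    unfold trajProb
    rw [← Fintype.prod_extend_by_one (Finset.Iic t)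
      (fun l : Fin T => π (s l.castSucc) (a l) / β (s l.castSucc) (a l)),
      mul_assoc, ← Finset.prod_mul_distrib]
    congr 1
    refine Finset.prod_congr rfl fun l _ => ?_
    simp only [hwmix, Finset.mem_Iic]
    by_cases hl : l ≤ t
    · rw [if_pos hl, if_pos hl]
      calc β (s l.castSucc) (a l) * P (s l.castSucc) (a l) (s l.succ) *
            (π (s l.castSucc) (a l) / β (s l.castSucc) (a l))
          = π (s l.castSucc) (a l) * P (s l.castSucc) (a l) (s l.succ) *
            (β (s l.castSucc) (a l) / β (s l.castSucc) (a l)) := by ring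
        _ = π (s l.castSucc) (a l) * P (s l.castSucc) (a l) (s l.succ) := by
            rw [div_self (hβpos _ _).ne', mul_one]
    · rw [if_neg hl, if_neg hl, mul_one]
  calc ∑ s : Fin (T + 1) → S, ∑ a : Fin T → A,
        trajProb P β d0 s a *
          ∑ t : Fin T,
            (∏ l ∈ Finset.Iic t, π (s l.castSucc) (a l) / β (s l.castSucc) (a l)) *
              γ ^ (t : ℕ) * R (s t.castSucc) (a t)
      = ∑ s : Fin (T + 1) → S, ∑ a : Fin T → A, ∑ t : Fin T,
          trajProb P β d0 s a *
            ((∏ l ∈ Finset.Iic t, π (s l.castSucc) (a l) / β (s l.castSucc) (a l)) *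
              γ ^ (t : ℕ) * R (s t.castSucc) (a t)) :=
        Finset.sum_congr rfl fun s _ => Finset.sum_congr rfl fun a _ =>
          Finset.mul_sum _ _ _
    _ = ∑ t : Fin T, ∑ s : Fin (T + 1) → S, ∑ a : Fin T → A,
          trajProb P β d0 s a *
            ((∏ l ∈ Finset.Iic t, π (s l.castSucc) (a l) / β (s l.castSucc) (a l)) *
              γ ^ (t : ℕ) * R (s t.castSucc) (a t)) := hswap _
    _ = ∑ t : Fin T, γ ^ (t : ℕ) *
          chainE T d0 (wmix t) (fun s a => R (s t.castSucc) (a t)) := by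
        refine Finset.sum_congr rfl fun t _ => ?_
        unfold chainE
        rw [Finset.mul_sum]
        refine Finset.sum_congr rfl fun s _ => ?_
        rw [Finset.mul_sum]
        refine Finset.sum_congr rfl fun a _ => ?_
        have h := hpoint t s a
        calc trajProb P β d0 s a *
              ((∏ l ∈ Finset.Iic t, π (s l.castSucc) (a l) / β (s l.castSucc) (a l)) *
                γ ^ (t : ℕ) * R (s t.castSucc) (a t))
            = (trajProb P β d0 s a *
                ∏ l ∈ Finset.Iic t, π (s l.castSucc) (a l) / β (s l.castSucc) (a l)) *
                γ ^ (t : ℕ) * R (s t.castSucc) (a t) := by ring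
          _ = _ := by rw [h]; ring
    _ = ∑ t : Fin T, γ ^ (t : ℕ) *
          chainE T d0 wπ (fun s a => R (s t.castSucc) (a t)) := by
        refine Finset.sum_congr rfl fun t _ => ?_
        congr 1
        exact chainE_eq T t d0 (wmix t) wπ R
          (fun l hl => by funext x y z; simp only [hwmix, hwπ, if_pos hl])
          (fun l hl s => hnormmix t l hl s)
          (fun l hl s => hnormπ l s)
    _ = ∑ t : Fin T, ∑ s : Fin (T + 1) → S, ∑ a : Fin T → A,
          trajProb P π d0 s a * (γ ^ (t : ℕ) * R (s t.castSucc) (a t)) := by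
        refine Finset.sum_congr rfl fun t _ => ?_
        unfold chainE trajProb
        rw [Finset.mul_sum]
        refine Finset.sum_congr rfl fun s _ => ?_
        rw [Finset.mul_sum]
        refine Finset.sum_congr rfl fun a _ => ?_
        simp only [hwπ]
        ring
    _ = ∑ s : Fin (T + 1) → S, ∑ a : Fin T → A, ∑ t : Fin T,
          trajProb P π d0 s a * (γ ^ (t : ℕ) * R (s t.castSucc) (a t)) := (hswap _).symm
    _ = _ :=
        Finset.sum_congr rfl fun s _ => Finset.sum_congr rfl fun a _ =>
          (Finset.mul_sum _ _ _).symm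
end
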